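/- Let P be a symmetric idempotent real n×n matrix, M a symmetric positive definite real n×n matrix, μ > 0, M̄ = P M P + μ (I − P), S = I − M M̄⁻¹ P, and let Λ be a real n×n matrix with P Λ = 0 and Λᵀ P = 0. Suppose vectors v, a, f, f_g, f_c and a matrix C satisfy: P v = v, (I − P) a = (Λ P + P Λᵀ) v, P f_c = 0, and M a + C v = f_g + f_c + f. Then the generalized constraint force is given by f_c = −S (f + f_g − C v − M Λ v). -/

import Mathlib

open Matrix

/-- Closed-form generalized constraint force of the constrained system: under the
velocity constraint `P v = v`, the differentiated constraint
`(I - P) a = (ΛP + PΛᵀ) v`, the annihilation `P f_c = 0` and the dynamics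
`M a + C v = f_g + f_c + f`, the constraint force is
`f_c = -S (f + f_g - C v - M Λ v)`. -/
theorem stmt_19 (n : ℕ)
    (P M : Matrix (Fin n) (Fin n) ℝ)
    (hPsymm : Pᵀ = P) (hPidem : P * P = P)
    (hM : M.PosDef) (μ : ℝ) (hμ : 0 < μ)
    (Mbar S Λ C : Matrix (Fin n) (Fin n) ℝ)
    (hMbar : Mbar = P * M * P + μ • ((1 : Matrix (Fin n) (Fin n) ℝ) - P))
    (hS : S = 1 - M * Mbar⁻¹ * P)
    (hΛ1 : P * Λ = 0) (hΛ2 : Λᵀ * P = 0)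
    (v a f f_g f_c : Fin n → ℝ)
    (hv : P.mulVec v = v)
    (hacc : ((1 : Matrix (Fin n) (Fin n) ℝ) - P).mulVec a = (Λ * P + P * Λᵀ).mulVec v)
    (hfc : P.mulVec f_c = 0)
    (hdyn : M.mulVec a + C.mulVec v = f_g + f_c + f) :
    f_c = -(S.mulVec (f + f_g - C.mulVec v - (M * Λ).mulVec v)) := by
  -- Mbar is positive definite
  have hQidem : ((1 : Matrix (Fin n) (Fin n) ℝ) - P) * (1 - P) = 1 - P := by
    simp [Matrix.mul_sub, Matrix.sub_mul, hPidem]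
  have hQsymm : ((1 : Matrix (Fin n) (Fin n) ℝ) - P)ᵀ = 1 - P := by
    simp [Matrix.transpose_sub, hPsymm]
  have hMbarPD : Mbar.PosDef := by
    rw [Matrix.posDef_iff_dotProduct_mulVec]
    constructor
    · show Mbarᵀ = Mbar
      have hMsymm : Mᵀ = M := by simpa using hM.isHermitian.eq
      rw [hMbar]
      simp [Matrix.transpose_add, Matrix.transpose_smul, Matrix.transpose_mul, hPsymm,
        hMsymm, hQsymm, Matrix.mul_assoc]
    · intro x hx
      have key : star x ⬝ᵥ Mbar *ᵥ x =
          (P *ᵥ x) ⬝ᵥ M *ᵥ (P *ᵥ x) + μ * (((1 - P) *ᵥ x) ⬝ᵥ ((1 - P) *ᵥ x)) := by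
        rw [hMbar]
        simp only [Matrix.add_mulVec, Matrix.smul_mulVec, dotProduct_add,
          dotProduct_smul, star_trivial, smul_eq_mul]
        congr 1
        · rw [← Matrix.mulVec_mulVec, ← Matrix.mulVec_mulVec, Matrix.dotProduct_mulVec,
            ← Matrix.mulVec_transpose, hPsymm]
        · congr 1
          conv_lhs => rw [← hQidem]
          rw [← Matrix.mulVec_mulVec, Matrix.dotProduct_mulVec, ← Matrix.mulVec_transpose,
            hQsymm]
      rw [key]
      rcases eq_or_ne (P *ᵥ x) 0 with hy | hy
      · have hz : (1 - P) *ᵥ x ≠ 0 := by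
          intro hz
          apply hx
          have hdecomp : x = P *ᵥ x + (1 - P) *ᵥ x := by
            rw [Matrix.sub_mulVec, Matrix.one_mulVec]; abel
          rw [hdecomp, hy, hz, add_zero]
        have h1 : (0:ℝ) ≤ (P *ᵥ x) ⬝ᵥ M *ᵥ (P *ᵥ x) := by
          simpa using hM.posSemidef.dotProduct_mulVec_nonneg (P *ᵥ x)
        have h2 : (0:ℝ) < ((1 - P) *ᵥ x) ⬝ᵥ ((1 - P) *ᵥ x) := by
          have hnn : (0:ℝ) ≤ ((1 - P) *ᵥ x) ⬝ᵥ ((1 - P) *ᵥ x) :=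
            Finset.sum_nonneg fun i _ => mul_self_nonneg _
          rcases lt_or_eq_of_le hnn with h | h
          · exact h
          · exact absurd (dotProduct_self_eq_zero.mp h.symm) hz
        positivity
      · have h1 : (0:ℝ) < (P *ᵥ x) ⬝ᵥ M *ᵥ (P *ᵥ x) := by
          simpa using hM.dotProduct_mulVec_pos hy
        have h2 : (0:ℝ) ≤ ((1 - P) *ᵥ x) ⬝ᵥ ((1 - P) *ᵥ x) :=
          Finset.sum_nonneg fun i _ => mul_self_nonneg _
        positivity
  have hinv : Mbar⁻¹ * Mbar = 1 := Matrix.nonsing_inv_mul _ hMbarPD.det_pos.ne'.isUnit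
  -- acceleration decomposition
  have hΛv : Λᵀ *ᵥ v = 0 := by
    rw [← hv, Matrix.mulVec_mulVec, hΛ2, Matrix.zero_mulVec]
  have hQa : a - P *ᵥ a = Λ *ᵥ v := by
    have := hacc
    rw [Matrix.sub_mulVec, Matrix.one_mulVec, Matrix.add_mulVec, ← Matrix.mulVec_mulVec,
      ← Matrix.mulVec_mulVec, hv, hΛv, Matrix.mulVec_zero, add_zero] at this
    exact this
  set w := f + f_g - C *ᵥ v - (M * Λ) *ᵥ v with hw
  have ha : a = P *ᵥ a + Λ *ᵥ v := by rw [← hQa]; abel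
  have hMPa : M *ᵥ (P *ᵥ a) = w + f_c := by
    have h1 : M *ᵥ a = M *ᵥ (P *ᵥ a) + (M * Λ) *ᵥ v := by
      rw [← Matrix.mulVec_mulVec]
      conv_lhs => rw [ha]
      rw [Matrix.mulVec_add]
    have h2 := hdyn
    rw [h1] at h2
    have h3 : M *ᵥ (P *ᵥ a) = f_g + f_c + f - (M * Λ) *ᵥ v - C *ᵥ v := by
      rw [← h2]; abel
    rw [hw, h3]; abel
  have hPMPa : Mbar *ᵥ (P *ᵥ a) = P *ᵥ w := by
    have hPP : P *ᵥ (P *ᵥ a) = P *ᵥ a := by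
      rw [Matrix.mulVec_mulVec, hPidem]
    rw [hMbar, Matrix.add_mulVec, Matrix.smul_mulVec, Matrix.sub_mulVec,
      Matrix.one_mulVec, hPP, sub_self, smul_zero, add_zero,
      ← Matrix.mulVec_mulVec, ← Matrix.mulVec_mulVec, hPP, hMPa, Matrix.mulVec_add, hfc,
      add_zero]
  have hPa : P *ᵥ a = Mbar⁻¹ *ᵥ (P *ᵥ w) := by
    rw [← hPMPa, Matrix.mulVec_mulVec, hinv, Matrix.one_mulVec]
  rw [hS]
  have : f_c = M *ᵥ (P *ᵥ a) - w := by rw [hMPa]; abel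
  rw [this, hPa, Matrix.sub_mulVec, Matrix.one_mulVec, Matrix.mulVec_mulVec,
    Matrix.mulVec_mulVec, ← Matrix.mulVec_mulVec]
  abel
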